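/- Let λ > 0 and let ζ : ℝ → ℝ be a continuously differentiable odd function with ζ and ζ' square integrable on ℝ. Then 2∫_ℝ ζ'(x)² dx − (1/λ²)∫_ℝ sech²(x/λ) ζ(x)² dx ≥ (3/2)∫_ℝ ζ'(x)² dx; equivalently, (1/λ²)∫_ℝ sech²(x/λ) ζ(x)² dx ≤ ½∫_ℝ ζ'(x)² dx. -/

import Mathlib

open MeasureTheory Real
open scoped ENNReal NNReal

noncomputable section

/-- Cauchy–Schwarz for integrals of nonnegative functions. -/
lemma aux_sq_integral_mul_le {μ : Measure ℝ} {f g : ℝ → ℝ}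
    (hfm : AEStronglyMeasurable f μ) (hgm : AEStronglyMeasurable g μ)
    (hf0 : ∀ x, 0 ≤ f x) (hg0 : ∀ x, 0 ≤ g x)
    (hf2 : Integrable (fun x => f x ^ 2) μ) (hg2 : Integrable (fun x => g x ^ 2) μ) :
    (∫ x, f x * g x ∂μ) ^ 2 ≤ (∫ x, f x ^ 2 ∂μ) * (∫ x, g x ^ 2 ∂μ) := by
  have hconj : Real.HolderConjugate 2 2 := Real.HolderConjugate.two_two
  have h2 : (ENNReal.ofReal (2:ℝ)) = 2 := by norm_num
  have hfL : MemLp f (ENNReal.ofReal (2:ℝ)) μ := by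
    rw [h2]; exact (memLp_two_iff_integrable_sq hfm).mpr hf2
  have hgL : MemLp g (ENNReal.ofReal (2:ℝ)) μ := by
    rw [h2]; exact (memLp_two_iff_integrable_sq hgm).mpr hg2
  have h := integral_mul_le_Lp_mul_Lq_of_nonneg hconj (Filter.Eventually.of_forall hf0)
    (Filter.Eventually.of_forall hg0) hfL hgL
  simp only [Real.rpow_two] at h
  have h1 : 0 ≤ ∫ x, f x * g x ∂μ :=
    integral_nonneg fun x => mul_nonneg (hf0 x) (hg0 x)
  have hXnn : 0 ≤ ∫ x, f x ^ 2 ∂μ := integral_nonneg fun x => sq_nonneg _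
  have hYnn : 0 ≤ ∫ x, g x ^ 2 ∂μ := integral_nonneg fun x => sq_nonneg _
  calc (∫ x, f x * g x ∂μ) ^ 2
      ≤ ((∫ x, f x ^ 2 ∂μ) ^ (1/2:ℝ) * (∫ x, g x ^ 2 ∂μ) ^ (1/2:ℝ)) ^ 2 :=
        pow_le_pow_left₀ h1 h 2
    _ = (∫ x, f x ^ 2 ∂μ) * (∫ x, g x ^ 2 ∂μ) := by
        rw [mul_pow, ← Real.rpow_natCast ((∫ x, f x ^ 2 ∂μ) ^ (1/2:ℝ)) 2,
          ← Real.rpow_natCast ((∫ x, g x ^ 2 ∂μ) ^ (1/2:ℝ)) 2,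
          ← Real.rpow_mul hXnn, ← Real.rpow_mul hYnn]
        norm_num

set_option maxHeartbeats 1000000 in
/-- coercivity of the bilinear form
`𝓑(ζ) = 2∫ζ'² − (1/λ²)∫sech²(x/λ)ζ²` on odd functions:
`𝓑(ζ) ≥ (3/2)∫ζ'²`, equivalently `(1/λ²)∫sech²(x/λ)ζ² ≤ ½∫ζ'²`. -/
theorem coercivity_of_bilinear_form
    (lam : ℝ) (hlam : 0 < lam) (ζ : ℝ → ℝ)
    (hC1 : ContDiff ℝ 1 ζ)
    (hodd : ∀ x : ℝ, ζ (-x) = -ζ x)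
    (hL2 : Integrable fun x : ℝ => ζ x ^ 2)
    (hL2' : Integrable fun x : ℝ => deriv ζ x ^ 2) :
    ((2 * ∫ x : ℝ, deriv ζ x ^ 2)
      - (1 / lam ^ 2) * (∫ x : ℝ, ((Real.cosh (x / lam))⁻¹) ^ 2 * ζ x ^ 2)
      ≥ (3 / 2) * ∫ x : ℝ, deriv ζ x ^ 2) ∧
    ((1 / lam ^ 2) * (∫ x : ℝ, ((Real.cosh (x / lam))⁻¹) ^ 2 * ζ x ^ 2)
      ≤ (1 / 2) * ∫ x : ℝ, deriv ζ x ^ 2) := by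
  have hlam' : lam ≠ 0 := hlam.ne'
  have hdiff : Differentiable ℝ ζ := hC1.differentiable one_ne_zero
  have hcont : Continuous ζ := hdiff.continuous
  have hcont' : Continuous (deriv ζ) := hC1.continuous_deriv le_rfl
  have hζ0 : ζ 0 = 0 := by have := hodd 0; simp at this; linarith
  -- the derivative is even
  have hdeven : ∀ x : ℝ, deriv ζ (-x) = deriv ζ x := by
    intro x
    have h1 : HasDerivAt (fun y => ζ (-y)) (deriv ζ (-x) * (-1)) x :=
      ((hdiff (-x)).hasDerivAt).comp x (hasDerivAt_neg x)
    have h2 : HasDerivAt (fun y => ζ (-y)) (-(deriv ζ x)) x := by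
      have : (fun y => ζ (-y)) = fun y => -ζ y := funext hodd
      rw [this]; exact ((hdiff x).hasDerivAt).neg
    have := h1.unique h2
    linarith
  -- notations
  set w : ℝ → ℝ := fun t => deriv ζ t ^ 2 * Real.cosh (t / lam) ^ 2 with hw
  set c : ℝ → ℝ := fun x => lam * Real.sinh (x / lam) / Real.cosh (x / lam) ^ 3 with hc
  have hcoshpos : ∀ x : ℝ, (0:ℝ) < Real.cosh (x / lam) := fun x => Real.cosh_pos _
  have hcontw : Continuous w := by fun_prop
  have hcontc : Continuous c := by
    apply Continuous.div
    · fun_prop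
    · fun_prop
    · intro x; positivity
  -- even function reductions
  have hAeven : (∫ x : ℝ, deriv ζ x ^ 2) = 2 * ∫ x in Set.Ioi (0:ℝ), deriv ζ x ^ 2 := by
    rw [← integral_comp_abs (f := fun x => deriv ζ x ^ 2)]
    refine integral_congr_ae (Filter.Eventually.of_forall fun x => ?_)
    show deriv ζ x ^ 2 = deriv ζ |x| ^ 2
    rcases abs_cases x with ⟨h, _⟩ | ⟨h, _⟩
    · rw [h]
    · rw [h, hdeven]
  have hSeven : (∫ x : ℝ, ((Real.cosh (x / lam))⁻¹) ^ 2 * ζ x ^ 2)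
      = 2 * ∫ x in Set.Ioi (0:ℝ), ((Real.cosh (x / lam))⁻¹) ^ 2 * ζ x ^ 2 := by
    rw [← integral_comp_abs
      (f := fun x => ((Real.cosh (x / lam))⁻¹) ^ 2 * ζ x ^ 2)]
    refine integral_congr_ae (Filter.Eventually.of_forall fun x => ?_)
    show (Real.cosh (x / lam))⁻¹ ^ 2 * ζ x ^ 2 = (Real.cosh (|x| / lam))⁻¹ ^ 2 * ζ |x| ^ 2
    have hch : Real.cosh (|x| / lam) = Real.cosh (x / lam) := by
      rw [show |x| / lam = |x / lam| by rw [abs_div, abs_of_pos hlam], Real.cosh_abs]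
    rcases abs_cases x with ⟨h, _⟩ | ⟨h, _⟩
    · rw [h]
    · rw [hch, h, hodd]; ring_nf
  -- FTC: ζ x = ∫_{(0,x]} ζ'
  have hFTC : ∀ x : ℝ, 0 ≤ x → ζ x = ∫ t in Set.Ioc 0 x, deriv ζ t := by
    intro x hx
    have h := intervalIntegral.integral_deriv_eq_sub (f := ζ) (a := 0) (b := x)
      (fun t _ => hdiff t) (hcont'.intervalIntegrable 0 x)
    rw [hζ0, sub_zero] at h
    rw [← h, intervalIntegral.integral_of_le hx]
  -- antiderivative of sech²(t/λ)
  have hT : ∀ x : ℝ, HasDerivAt (fun y => lam * (Real.sinh (y / lam) / Real.cosh (y / lam)))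
      (((Real.cosh (x / lam))⁻¹) ^ 2) x := by
    intro x
    have hdl : HasDerivAt (fun y : ℝ => y / lam) (1 / lam) x := by
      simpa using (hasDerivAt_id x).div_const lam
    have hs : HasDerivAt (fun y => Real.sinh (y / lam)) (Real.cosh (x / lam) * (1 / lam)) x :=
      (Real.hasDerivAt_sinh (x / lam)).comp (h₂ := Real.sinh) x hdl
    have hch : HasDerivAt (fun y => Real.cosh (y / lam)) (Real.sinh (x / lam) * (1 / lam)) x :=
      (Real.hasDerivAt_cosh (x / lam)).comp (h₂ := Real.cosh) x hdl
    have hq := (hs.fun_div hch (hcoshpos x).ne')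
    have hfin := hq.const_mul lam
    refine hfin.congr_deriv ?_
    have h1 := Real.cosh_sq_sub_sinh_sq (x / lam)
    have h2 := (hcoshpos x).ne'
    field_simp
    nlinarith [hcoshpos x]
  -- antiderivative of c
  have hG : ∀ x : ℝ, HasDerivAt (fun y => -(lam ^ 2 / 2) / Real.cosh (y / lam) ^ 2) (c x) x := by
    intro x
    have hdl : HasDerivAt (fun y : ℝ => y / lam) (1 / lam) x := by
      simpa using (hasDerivAt_id x).div_const lam
    have hch : HasDerivAt (fun y => Real.cosh (y / lam)) (Real.sinh (x / lam) * (1 / lam)) x :=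
      (Real.hasDerivAt_cosh (x / lam)).comp (h₂ := Real.cosh) x hdl
    have hch2 : HasDerivAt (fun y => Real.cosh (y / lam) ^ 2)
        (2 * Real.cosh (x / lam) * (Real.sinh (x / lam) * (1 / lam))) x := by
      have := hch.fun_pow 2
      refine this.congr_deriv ?_
      ring
    have hq := (hasDerivAt_const x (-(lam ^ 2 / 2))).fun_div hch2 (by positivity)
    refine hq.congr_deriv ?_
    have := (hcoshpos x).ne'
    simp only [hc]
    field_simp
    ring
  -- limit at infinity of the antiderivative
  have hGtend : Filter.Tendsto (fun y => -(lam ^ 2 / 2) / Real.cosh (y / lam) ^ 2)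
      Filter.atTop (nhds 0) := by
    have hcoshtop : Filter.Tendsto (fun y : ℝ => Real.cosh (y / lam)) Filter.atTop
        Filter.atTop := by
      have hexp : ∀ y : ℝ, Real.exp (y / lam) / 2 ≤ Real.cosh (y / lam) := by
        intro y
        rw [Real.cosh_eq]
        have := (Real.exp_pos (-(y / lam))).le
        linarith
      exact Filter.tendsto_atTop_mono hexp
        ((Real.tendsto_exp_atTop.comp (Filter.tendsto_id.atTop_div_const hlam)).atTop_div_const
          (by norm_num : (0:ℝ) < 2))
    have hsq : Filter.Tendsto (fun y : ℝ => Real.cosh (y / lam) ^ 2) Filter.atTop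
        Filter.atTop := by
      apply Filter.tendsto_atTop_mono (fun y => ?_) hcoshtop
      nlinarith [Real.one_le_cosh (y / lam), hcoshpos y]
    exact Filter.Tendsto.div_atTop tendsto_const_nhds hsq
  have hcnn : ∀ x : ℝ, 0 < x → 0 ≤ c x := by
    intro x hx
    have h1 : 0 < Real.sinh (x / lam) := Real.sinh_pos_iff.mpr (by positivity)
    have h2 := hcoshpos x
    simp only [hc]
    positivity
  have hcint : ∀ t : ℝ, 0 < t → IntegrableOn c (Set.Ioi t) := fun t ht =>
    integrableOn_Ioi_deriv_of_nonneg (hG t).continuousAt.continuousWithinAt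
      (fun x hx => hG x) (fun x hx => hcnn x (ht.trans hx)) hGtend
  have hcval : ∀ t : ℝ, 0 < t →
      (∫ x in Set.Ioi t, c x) = lam ^ 2 / 2 / Real.cosh (t / lam) ^ 2 := by
    intro t ht
    have h := integral_Ioi_of_hasDerivAt_of_nonneg (hG t).continuousAt.continuousWithinAt
      (fun x hx => hG x) (fun x hx => hcnn x (ht.trans hx)) hGtend
    rw [h]; ring
  -- integrability of w on bounded intervals
  have hwint : ∀ x : ℝ, IntegrableOn w (Set.Ioc 0 x) := fun x => hcontw.integrableOn_Ioc
  have hwnn : ∀ t : ℝ, 0 ≤ w t := fun t => by positivity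
  -- pointwise Cauchy-Schwarz bound
  have hpt : ∀ x : ℝ, 0 < x →
      ((Real.cosh (x / lam))⁻¹) ^ 2 * ζ x ^ 2 ≤ c x * ∫ t in Set.Ioc 0 x, w t := by
    intro x hx
    have hfm : AEStronglyMeasurable (fun t => |deriv ζ t| * Real.cosh (t / lam))
        (volume.restrict (Set.Ioc (0:ℝ) x)) :=
      ((hcont'.abs.mul (by fun_prop)).aestronglyMeasurable)
    have hgm : AEStronglyMeasurable (fun t : ℝ => (Real.cosh (t / lam))⁻¹)
        (volume.restrict (Set.Ioc (0:ℝ) x)) := by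
      apply Continuous.aestronglyMeasurable
      exact Continuous.inv₀ (by fun_prop) (fun t => (hcoshpos t).ne')
    have hf2 : Integrable (fun t => (|deriv ζ t| * Real.cosh (t / lam)) ^ 2)
        (volume.restrict (Set.Ioc (0:ℝ) x)) := by
      apply Continuous.integrableOn_Ioc
      fun_prop
    have hg2 : Integrable (fun t : ℝ => ((Real.cosh (t / lam))⁻¹) ^ 2)
        (volume.restrict (Set.Ioc (0:ℝ) x)) := by
      apply Continuous.integrableOn_Ioc
      exact ((Continuous.inv₀ (by fun_prop) (fun t => (hcoshpos t).ne')).pow 2)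
    have hCS := aux_sq_integral_mul_le hfm hgm
      (fun t => mul_nonneg (abs_nonneg _) (hcoshpos t).le)
      (fun t => inv_nonneg.mpr (hcoshpos t).le) hf2 hg2
    have habs : ∀ t : ℝ, |deriv ζ t| * Real.cosh (t / lam) * (Real.cosh (t / lam))⁻¹
        = |deriv ζ t| := by
      intro t; field_simp
    have hsq : ∀ t : ℝ, (|deriv ζ t| * Real.cosh (t / lam)) ^ 2 = w t := by
      intro t; rw [mul_pow, sq_abs]
    simp only [habs, hsq] at hCS
    -- value of ∫ sech²
    have hTval : (∫ t in Set.Ioc 0 x, ((Real.cosh (t / lam))⁻¹) ^ 2)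
        = lam * (Real.sinh (x / lam) / Real.cosh (x / lam)) := by
      have h := intervalIntegral.integral_eq_sub_of_hasDerivAt (f := fun y =>
          lam * (Real.sinh (y / lam) / Real.cosh (y / lam)))
        (fun t _ => hT t)
        (Continuous.intervalIntegrable
          ((Continuous.inv₀ (by fun_prop) (fun t => (hcoshpos t).ne')).pow 2) 0 x)
      rw [intervalIntegral.integral_of_le hx.le] at h
      rw [h]
      simp
    rw [hTval] at hCS
    have hζle : ζ x ^ 2 ≤ (∫ t in Set.Ioc 0 x, |deriv ζ t|) ^ 2 := by
      rw [hFTC x hx.le]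
      have h1 : ‖∫ t in Set.Ioc 0 x, deriv ζ t‖ ≤ ∫ t in Set.Ioc 0 x, ‖deriv ζ t‖ :=
        norm_integral_le_integral_norm _
      simp only [Real.norm_eq_abs] at h1
      calc (∫ t in Set.Ioc 0 x, deriv ζ t) ^ 2 = |∫ t in Set.Ioc 0 x, deriv ζ t| ^ 2 := by
            rw [sq_abs]
        _ ≤ (∫ t in Set.Ioc 0 x, |deriv ζ t|) ^ 2 :=
            pow_le_pow_left₀ (abs_nonneg _) h1 2
    have hkey : ζ x ^ 2 ≤ lam * (Real.sinh (x / lam) / Real.cosh (x / lam))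
        * ∫ t in Set.Ioc 0 x, w t := by
      calc ζ x ^ 2 ≤ (∫ t in Set.Ioc 0 x, |deriv ζ t|) ^ 2 := hζle
        _ ≤ (∫ t in Set.Ioc 0 x, w t) * (lam * (Real.sinh (x / lam) / Real.cosh (x / lam))) :=
            hCS
        _ = _ := by ring
    have hsech2 : (0:ℝ) ≤ ((Real.cosh (x / lam))⁻¹) ^ 2 := by positivity
    calc ((Real.cosh (x / lam))⁻¹) ^ 2 * ζ x ^ 2
        ≤ ((Real.cosh (x / lam))⁻¹) ^ 2 * (lam * (Real.sinh (x / lam) / Real.cosh (x / lam))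
            * ∫ t in Set.Ioc 0 x, w t) := mul_le_mul_of_nonneg_left hkey hsech2
      _ = c x * ∫ t in Set.Ioc 0 x, w t := by
          have h8 := (hcoshpos x).ne'
          have h9 : ((Real.cosh (x / lam))⁻¹) ^ 2 * (lam * (Real.sinh (x / lam) / Real.cosh (x / lam)))
              = lam * Real.sinh (x / lam) / Real.cosh (x / lam) ^ 3 := by
            field_simp
          rw [← mul_assoc, h9]
  -- Tonelli setup
  set W : ℝ → ℝ≥0∞ := fun t => ENNReal.ofReal (w t) with hW
  set C : ℝ → ℝ≥0∞ := fun x => ENNReal.ofReal (c x) with hC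
  have hWm : Measurable W := ENNReal.measurable_ofReal.comp hcontw.measurable
  have hCm : Measurable C := ENNReal.measurable_ofReal.comp hcontc.measurable
  set K : ℝ × ℝ → ℝ≥0∞ := fun p =>
    ({q : ℝ × ℝ | 0 < q.2 ∧ q.2 ≤ q.1}).indicator (fun q => C q.1 * W q.2) p with hK
  have hsetm : MeasurableSet {q : ℝ × ℝ | 0 < q.2 ∧ q.2 ≤ q.1} :=
    (measurableSet_lt measurable_const measurable_snd).inter
      (measurableSet_le measurable_snd measurable_fst)
  have hKm : Measurable K :=
    ((hCm.comp measurable_fst).mul (hWm.comp measurable_snd)).indicator hsetm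
  -- inner integral in t
  have hinner1 : ∀ x : ℝ, (∫⁻ t, K (x, t)) = C x * ∫⁻ t in Set.Ioc 0 x, W t := by
    intro x
    have heq : (fun t => K (x, t)) = (Set.Ioc 0 x).indicator (fun t => C x * W t) := by
      funext t
      by_cases h : 0 < t ∧ t ≤ x
      · simp [hK, Set.indicator, h, Set.mem_Ioc]
      · simp [hK, Set.indicator, h, Set.mem_Ioc]
    rw [heq, lintegral_indicator measurableSet_Ioc _, lintegral_const_mul _ hWm]
  -- inner integral in x after swap
  have hinner2 : ∀ t : ℝ, (∫⁻ x, K (x, t))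
      = (Set.Ioi (0:ℝ)).indicator
          (fun t => W t * ENNReal.ofReal (lam ^ 2 / 2 / Real.cosh (t / lam) ^ 2)) t := by
    intro t
    by_cases ht : 0 < t
    · have heq : (fun x => K (x, t)) = (Set.Ici t).indicator (fun x => C x * W t) := by
        funext x
        by_cases h : t ≤ x
        · simp [hK, Set.indicator, h, ht, Set.mem_Ici]
        · simp [hK, Set.indicator, h, ht, Set.mem_Ici]
      rw [heq, lintegral_indicator measurableSet_Ici _, lintegral_mul_const _ hCm]
      have hIci : (∫⁻ x in Set.Ici t, C x) = ∫⁻ x in Set.Ioi t, C x :=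
        (setLIntegral_congr (Ioi_ae_eq_Ici (μ := volume) (a := t))).symm
      have hval : (∫⁻ x in Set.Ioi t, C x)
          = ENNReal.ofReal (lam ^ 2 / 2 / Real.cosh (t / lam) ^ 2) := by
        rw [hC]
        rw [← ofReal_integral_eq_lintegral_ofReal (hcint t ht)
          ((ae_restrict_iff' measurableSet_Ioi).2
            (Filter.Eventually.of_forall (fun x hx => hcnn x (ht.trans hx))))]
        rw [hcval t ht]
      rw [hIci, hval, Set.indicator_of_mem (Set.mem_Ioi.mpr ht)]
      exact mul_comm _ _
    · have heq : (fun x => K (x, t)) = fun _ => (0:ℝ≥0∞) := by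
        funext x
        have : ¬(0 < t ∧ t ≤ x) := fun h => ht h.1
        simp [hK, Set.indicator, this]
      rw [heq, lintegral_const, zero_mul,
        Set.indicator_of_notMem (by simpa using ht)]
  -- value of the swapped double integral
  have hB : IntegrableOn (fun t => deriv ζ t ^ 2) (Set.Ioi (0:ℝ)) := hL2'.integrableOn
  have hswapval : (∫⁻ t, ∫⁻ x, K (x, t))
      = ENNReal.ofReal (lam ^ 2 / 2 * ∫ t in Set.Ioi (0:ℝ), deriv ζ t ^ 2) := by
    have h1 : (∫⁻ t, ∫⁻ x, K (x, t))
        = ∫⁻ t in Set.Ioi (0:ℝ),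
            W t * ENNReal.ofReal (lam ^ 2 / 2 / Real.cosh (t / lam) ^ 2) := by
      rw [← lintegral_indicator measurableSet_Ioi _]
      exact lintegral_congr hinner2
    have h2 : ∀ t : ℝ, W t * ENNReal.ofReal (lam ^ 2 / 2 / Real.cosh (t / lam) ^ 2)
        = ENNReal.ofReal (lam ^ 2 / 2 * deriv ζ t ^ 2) := by
      intro t
      rw [hW, ← ENNReal.ofReal_mul (hwnn t)]
      congr 1
      have h3 := (hcoshpos t).ne'
      simp only [hw]
      field_simp
    rw [h1]
    simp only [h2]
    rw [← ofReal_integral_eq_lintegral_ofReal ((hB.const_mul (lam ^ 2 / 2)))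
      (Filter.Eventually.of_forall (fun t => by positivity))]
    rw [integral_const_mul]
  -- main bound on (0,∞)
  have hPint : IntegrableOn (fun x => ((Real.cosh (x / lam))⁻¹) ^ 2 * ζ x ^ 2)
      (Set.Ioi (0:ℝ)) := by
    apply Integrable.mono' hL2.integrableOn
    · apply Continuous.aestronglyMeasurable
      exact ((Continuous.inv₀ (by fun_prop) (fun t => (hcoshpos t).ne')).pow 2).mul
        (hcont.pow 2)
    · refine Filter.Eventually.of_forall (fun x => ?_)
      have h1 : ((Real.cosh (x / lam))⁻¹) ^ 2 ≤ 1 := by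
        have := Real.one_le_cosh (x / lam)
        have h2 : (Real.cosh (x / lam))⁻¹ ≤ 1 := by
          rw [inv_le_one_iff₀]; right; exact this
        have h3 : 0 ≤ (Real.cosh (x / lam))⁻¹ := inv_nonneg.mpr (hcoshpos x).le
        nlinarith
      rw [Real.norm_eq_abs, abs_of_nonneg (by positivity)]
      nlinarith [sq_nonneg (ζ x)]
  have hPbound : (∫ x in Set.Ioi (0:ℝ), ((Real.cosh (x / lam))⁻¹) ^ 2 * ζ x ^ 2)
      ≤ lam ^ 2 / 2 * ∫ t in Set.Ioi (0:ℝ), deriv ζ t ^ 2 := by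
    have hPnn : (0 : ℝ → ℝ) ≤ᵐ[volume.restrict (Set.Ioi (0:ℝ))]
        fun x => ((Real.cosh (x / lam))⁻¹) ^ 2 * ζ x ^ 2 :=
      Filter.Eventually.of_forall (fun x => by
        show (0:ℝ) ≤ ((Real.cosh (x / lam))⁻¹) ^ 2 * ζ x ^ 2
        positivity)
    have e1 : ENNReal.ofReal (∫ x in Set.Ioi (0:ℝ), ((Real.cosh (x / lam))⁻¹) ^ 2 * ζ x ^ 2)
        = ∫⁻ x in Set.Ioi (0:ℝ), ENNReal.ofReal (((Real.cosh (x / lam))⁻¹) ^ 2 * ζ x ^ 2) :=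
      ofReal_integral_eq_lintegral_ofReal hPint hPnn
    have e2 : (∫⁻ x in Set.Ioi (0:ℝ), ENNReal.ofReal (((Real.cosh (x / lam))⁻¹) ^ 2 * ζ x ^ 2))
        ≤ ∫⁻ x in Set.Ioi (0:ℝ), (∫⁻ t, K (x, t)) := by
      apply setLIntegral_mono (hKm.lintegral_prod_right')
      intro x hx
      have hx' : (0:ℝ) < x := hx
      calc ENNReal.ofReal (((Real.cosh (x / lam))⁻¹) ^ 2 * ζ x ^ 2)
          ≤ ENNReal.ofReal (c x * ∫ t in Set.Ioc 0 x, w t) :=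
            ENNReal.ofReal_le_ofReal (hpt x hx')
        _ = C x * ∫⁻ t in Set.Ioc 0 x, W t := by
            rw [ENNReal.ofReal_mul (hcnn x hx'), hC, hW,
              ofReal_integral_eq_lintegral_ofReal (hwint x)
                (Filter.Eventually.of_forall (fun t => hwnn t))]
        _ = ∫⁻ t, K (x, t) := (hinner1 x).symm
    have e3 : (∫⁻ x in Set.Ioi (0:ℝ), (∫⁻ t, K (x, t))) ≤ ∫⁻ x, ∫⁻ t, K (x, t) :=
      setLIntegral_le_lintegral _ _
    have e4 : (∫⁻ x, ∫⁻ t, K (x, t)) = ∫⁻ t, ∫⁻ x, K (x, t) :=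
      lintegral_lintegral_swap (f := fun x t => K (x, t))
        (by exact hKm.aemeasurable)
    have : ENNReal.ofReal (∫ x in Set.Ioi (0:ℝ), ((Real.cosh (x / lam))⁻¹) ^ 2 * ζ x ^ 2)
        ≤ ENNReal.ofReal (lam ^ 2 / 2 * ∫ t in Set.Ioi (0:ℝ), deriv ζ t ^ 2) := by
      rw [e1]
      calc (∫⁻ x in Set.Ioi (0:ℝ), ENNReal.ofReal (((Real.cosh (x / lam))⁻¹) ^ 2 * ζ x ^ 2))
          ≤ ∫⁻ x in Set.Ioi (0:ℝ), (∫⁻ t, K (x, t)) := e2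
        _ ≤ ∫⁻ x, ∫⁻ t, K (x, t) := e3
        _ = ∫⁻ t, ∫⁻ x, K (x, t) := e4
        _ = ENNReal.ofReal (lam ^ 2 / 2 * ∫ t in Set.Ioi (0:ℝ), deriv ζ t ^ 2) := hswapval
    have hRnn : (0:ℝ) ≤ lam ^ 2 / 2 * ∫ t in Set.Ioi (0:ℝ), deriv ζ t ^ 2 := by
      have : (0:ℝ) ≤ ∫ t in Set.Ioi (0:ℝ), deriv ζ t ^ 2 :=
        integral_nonneg (fun t => sq_nonneg _)
      positivity
    exact (ENNReal.ofReal_le_ofReal_iff hRnn).mp this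
  -- conclude
  have hlam2 : (0:ℝ) < lam ^ 2 := by positivity
  set B := ∫ t in Set.Ioi (0:ℝ), deriv ζ t ^ 2 with hBdef
  set P := ∫ x in Set.Ioi (0:ℝ), ((Real.cosh (x / lam))⁻¹) ^ 2 * ζ x ^ 2 with hPdef
  have hmain : (1 / lam ^ 2) * (∫ x : ℝ, ((Real.cosh (x / lam))⁻¹) ^ 2 * ζ x ^ 2)
      ≤ (1 / 2) * ∫ x : ℝ, deriv ζ x ^ 2 := by
    rw [hSeven, hAeven]
    have h1 : (1 / lam ^ 2) * (2 * P) ≤ (1 / lam ^ 2) * (2 * (lam ^ 2 / 2 * B)) := by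
      apply mul_le_mul_of_nonneg_left (by linarith [hPbound]) (by positivity)
    have h2 : (1 / lam ^ 2) * (2 * (lam ^ 2 / 2 * B)) = B := by field_simp
    have h3 : (1 / 2 : ℝ) * (2 * B) = B := by ring
    linarith
  exact ⟨by linarith [hmain], hmain⟩
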